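/- Let $\mathbf{H}$ and $\mathbf{H}'$ be set-valued classifiers such that $\mathbb{P}\{Y \in \mathbf{H}(X) \mid Y=y\} = \mathbb{P}\{Y \in \mathbf{H}'(X) \mid Y=y\} = 1-\alpha_y$ for all $y \in \{1,\ldots,K\}$. If $\mathbb{P}\{y \in \mathbf{H}(X) \mid Y \neq y\} \leq \mathbb{P}\{y \in \mathbf{H}'(X) \mid Y \neq y\}$ for all $y$, then $\mathbb{E}|\mathbf{H}(X)| \leq \mathbb{E}|\mathbf{H}'(X)|$. -/

import Mathlib

open MeasureTheory

/-- If `H` and `H'` have the same class-specific coverages `1 - α_y` and `H` has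
pointwise smaller probabilities of incorrect label assignment, then `H` has smaller
ambiguity. -/
theorem stmt3 {Ω 𝓧 : Type*} [MeasureSpace Ω] [IsProbabilityMeasure (volume : Measure Ω)]
    [MeasurableSpace 𝓧] {K : ℕ}
    (X : Ω → 𝓧) (Y : Ω → Fin K) (hX : Measurable X) (hY : Measurable Y)
    (H H' : 𝓧 → Finset (Fin K))
    (hHmeas : ∀ y : Fin K, MeasurableSet {x | y ∈ H x})
    (hH'meas : ∀ y : Fin K, MeasurableSet {x | y ∈ H' x})
    (α : Fin K → ℝ) (hα : ∀ y, α y ∈ Set.Icc (0:ℝ) 1)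
    (hpos : ∀ y : Fin K, volume {ω | Y ω = y} ≠ 0)
    (hposc : ∀ y : Fin K, volume {ω | Y ω ≠ y} ≠ 0)
    -- both classifiers have class-specific coverage exactly 1 - α_y
    (hcovH : ∀ y : Fin K,
      (volume {ω | Y ω ∈ H (X ω) ∧ Y ω = y}).toReal / (volume {ω | Y ω = y}).toReal
        = 1 - α y)
    (hcovH' : ∀ y : Fin K,
      (volume {ω | Y ω ∈ H' (X ω) ∧ Y ω = y}).toReal / (volume {ω | Y ω = y}).toReal
        = 1 - α y)
    -- H has smaller probabilities of incorrect label assignment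
    (hincorrect : ∀ y : Fin K,
      (volume {ω | y ∈ H (X ω) ∧ Y ω ≠ y}).toReal / (volume {ω | Y ω ≠ y}).toReal
        ≤ (volume {ω | y ∈ H' (X ω) ∧ Y ω ≠ y}).toReal / (volume {ω | Y ω ≠ y}).toReal) :
    ∫ ω, ((H (X ω)).card : ℝ) ≤ ∫ ω, ((H' (X ω)).card : ℝ) := by
  classical
  -- generic facts for a classifier G
  have meas : ∀ (G : 𝓧 → Finset (Fin K)), (∀ y, MeasurableSet {x | y ∈ G x}) →
      ∀ y : Fin K, MeasurableSet {ω | y ∈ G (X ω)} := by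
    intro G hG y
    exact hX (hG y)
  have measY : ∀ y : Fin K, MeasurableSet {ω | Y ω = y} := fun y =>
    hY (measurableSet_singleton y)
  -- integral of card is sum of measures
  have int_card : ∀ (G : 𝓧 → Finset (Fin K)), (∀ y, MeasurableSet {x | y ∈ G x}) →
      ∫ ω, ((G (X ω)).card : ℝ) = ∑ y : Fin K, (volume {ω | y ∈ G (X ω)}).toReal := by
    intro G hG
    have hfun : ∀ ω, ((G (X ω)).card : ℝ)
        = ∑ y : Fin K, Set.indicator {ω | y ∈ G (X ω)} (fun _ => (1:ℝ)) ω := by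
      intro ω
      have : ((G (X ω)).card : ℝ)
          = ∑ y : Fin K, (if y ∈ G (X ω) then (1:ℝ) else 0) := by
        rw [Finset.sum_boole]
        simp [Finset.filter_mem_eq_inter]
      rw [this]
      refine Finset.sum_congr rfl fun y _ => ?_
      simp [Set.indicator_apply]
    calc ∫ ω, ((G (X ω)).card : ℝ)
        = ∫ ω, ∑ y : Fin K, Set.indicator {ω | y ∈ G (X ω)} (fun _ => (1:ℝ)) ω := by
          simp_rw [hfun]
      _ = ∑ y : Fin K, ∫ ω, Set.indicator {ω | y ∈ G (X ω)} (fun _ => (1:ℝ)) ω := by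
          refine integral_finset_sum _ fun y _ => ?_
          exact (integrable_const (1:ℝ)).indicator (meas G hG y)
      _ = ∑ y : Fin K, (volume {ω | y ∈ G (X ω)}).toReal := by
          refine Finset.sum_congr rfl fun y _ => ?_
          rw [integral_indicator (meas G hG y)]
          simp
          rfl
  rw [int_card H hHmeas, int_card H' hH'meas]
  refine Finset.sum_le_sum fun y _ => ?_
  -- split each measure
  have hsplit : ∀ (G : 𝓧 → Finset (Fin K)), (∀ y, MeasurableSet {x | y ∈ G x}) →
      (volume {ω | y ∈ G (X ω)}).toReal
        = (volume {ω | y ∈ G (X ω) ∧ Y ω = y}).toReal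
          + (volume {ω | y ∈ G (X ω) ∧ Y ω ≠ y}).toReal := by
    intro G hG
    have hu : {ω | y ∈ G (X ω)}
        = {ω | y ∈ G (X ω) ∧ Y ω = y} ∪ {ω | y ∈ G (X ω) ∧ Y ω ≠ y} := by
      ext ω; by_cases h : Y ω = y <;> simp [h]
    have hd : Disjoint {ω | y ∈ G (X ω) ∧ Y ω = y} {ω | y ∈ G (X ω) ∧ Y ω ≠ y} := by
      rw [Set.disjoint_left]
      rintro ω ⟨-, h1⟩ ⟨-, h2⟩; exact h2 h1
    have hm2 : MeasurableSet {ω | y ∈ G (X ω) ∧ Y ω ≠ y} :=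
      (meas G hG y).inter (measY y).compl
    rw [hu, measure_union hd hm2,
      ENNReal.toReal_add (measure_ne_top _ _) (measure_ne_top _ _)]
  rw [hsplit H hHmeas, hsplit H' hH'meas]
  have hsetH : {ω | Y ω ∈ H (X ω) ∧ Y ω = y} = {ω | y ∈ H (X ω) ∧ Y ω = y} := by
    ext ω; constructor <;> rintro ⟨h1, h2⟩ <;> exact ⟨h2 ▸ h1, h2⟩
  have hsetH' : {ω | Y ω ∈ H' (X ω) ∧ Y ω = y} = {ω | y ∈ H' (X ω) ∧ Y ω = y} := by
    ext ω; constructor <;> rintro ⟨h1, h2⟩ <;> exact ⟨h2 ▸ h1, h2⟩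
  have hdpos : 0 < (volume {ω | Y ω = y}).toReal :=
    ENNReal.toReal_pos (hpos y) (measure_ne_top _ _)
  have hcpos : 0 < (volume {ω | Y ω ≠ y}).toReal :=
    ENNReal.toReal_pos (hposc y) (measure_ne_top _ _)
  have heq : (volume {ω | y ∈ H (X ω) ∧ Y ω = y}).toReal
      = (volume {ω | y ∈ H' (X ω) ∧ Y ω = y}).toReal := by
    have h1 := hcovH y
    have h2 := hcovH' y
    rw [hsetH] at h1
    rw [hsetH'] at h2
    have := h1.trans h2.symm
    field_simp at this
    linarith
  have hle : (volume {ω | y ∈ H (X ω) ∧ Y ω ≠ y}).toReal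
      ≤ (volume {ω | y ∈ H' (X ω) ∧ Y ω ≠ y}).toReal :=
    (div_le_div_iff_of_pos_right hcpos).mp (hincorrect y)
  linarith
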